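/- For all integers n ≥ 3 and r ≥ 3 with (n, r) ≠ (3, 3), the (r−1)-colour Ramsey number satisfies R_{r−1}(n, …, n) > r·n. -/

import Mathlib

open SimpleGraph

/-- The vertex-disjoint union `K_n + K_m` of two complete graphs. -/
def cliqueSum (n m : ℕ) : SimpleGraph (Fin n ⊕ Fin m) :=
  SimpleGraph.fromRel fun x y =>
    (∃ a b, x = Sum.inl a ∧ y = Sum.inl b) ∨ (∃ a b, x = Sum.inr a ∧ y = Sum.inr b)

/-- There is a copy of `H` in `G` that is monochromatic in colour `i`
under the edge-colouring `c`. -/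
def MonoCopy {V W : Type*} {r : ℕ} (G : SimpleGraph V) (H : SimpleGraph W)
    (c : Sym2 V → Fin r) (i : Fin r) : Prop :=
  ∃ f : H →g G, Function.Injective f ∧ ∀ u v, H.Adj u v → c s(f u, f v) = i

/-- `G` is `r`-Ramsey for `H`: every `r`-colouring of the edges of `G`
admits a monochromatic copy of `H`. -/
def IsRamseyFor {V W : Type*} (r : ℕ) (G : SimpleGraph V) (H : SimpleGraph W) : Prop :=
  ∀ c : Sym2 V → Fin r, ∃ i : Fin r, MonoCopy G H c i

/-- `G₁` and `G₂` are `r`-Ramsey equivalent. -/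
def RamseyEquiv {V W : Type*} (r : ℕ) (G₁ : SimpleGraph V) (G₂ : SimpleGraph W) : Prop :=
  ∀ {U : Type*} (G : SimpleGraph U), IsRamseyFor r G G₁ ↔ IsRamseyFor r G G₂

/-- `N` has the Ramsey property for clique sizes `n : Fin r → ℕ`: every `r`-colouring of
the edges of `K_N` admits a colour `i` and an `i`-monochromatic clique of size `n i`. -/
def HasRamseyProp (N : ℕ) {r : ℕ} (n : Fin r → ℕ) : Prop :=
  ∀ c : Sym2 (Fin N) → Fin r, ∃ i : Fin r, ∃ s : Finset (Fin N),
    s.card = n i ∧ ∀ u ∈ s, ∀ v ∈ s, u ≠ v → c s(u, v) = i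

/-- The Ramsey number `R_r(n 0, …, n (r-1))`. -/
noncomputable def ramseyNumber {r : ℕ} (n : Fin r → ℕ) : ℕ :=
  sInf {N | HasRamseyProp N n}


lemma ramsey_transfer {N r : ℕ} {n : Fin r → ℕ} (h : HasRamseyProp N n)
    {V : Type*} [DecidableEq V] (t : Finset V) (ht : N ≤ t.card) (c : Sym2 V → Fin r) :
    ∃ i : Fin r, ∃ s : Finset V, s ⊆ t ∧ s.card = n i ∧
      ∀ u ∈ s, ∀ v ∈ s, u ≠ v → c s(u, v) = i := by
  have hcard : Fintype.card (Fin N) ≤ t.card := by simpa using ht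
  obtain ⟨f, hf⟩ := Function.Embedding.exists_of_card_le_finset hcard
  obtain ⟨i, s, hs, hmono⟩ := h (fun e => c (e.map f))
  refine ⟨i, s.map f, ?_, by simpa using hs, ?_⟩
  · intro x hx
    simp only [Finset.mem_map] at hx
    obtain ⟨a, _, rfl⟩ := hx
    exact hf ⟨a, rfl⟩
  · intro u hu v hv huv
    simp only [Finset.mem_map] at hu hv
    obtain ⟨a, ha, rfl⟩ := hu
    obtain ⟨b, hb, rfl⟩ := hv
    have hab : a ≠ b := fun e => huv (by rw [e])
    have := hmono a ha b hb hab
    rwa [Sym2.map_pair_eq] at this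

lemma hasRamseyProp_mono {N M r : ℕ} {n : Fin r → ℕ} (hNM : N ≤ M)
    (h : HasRamseyProp N n) : HasRamseyProp M n := by
  intro c
  obtain ⟨i, s, _, hs, hmono⟩ := ramsey_transfer h (Finset.univ : Finset (Fin M))
    (by simpa using hNM) c
  exact ⟨i, s, hs, hmono⟩

lemma ramsey_exists {r : ℕ} (hr : 1 ≤ r) (n : Fin r → ℕ) : ∃ N, HasRamseyProp N n := by
  suffices H : ∀ S (n : Fin r → ℕ), (∑ i, n i) ≤ S → ∃ N, HasRamseyProp N n from
    H (∑ i, n i) n le_rfl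
  intro S
  induction S with
  | zero =>
    intro n hn
    refine ⟨0, fun c => ⟨⟨0, hr⟩, ∅, ?_, by simp⟩⟩
    have : n ⟨0, hr⟩ = 0 := by
      have := Finset.single_le_sum (f := n) (fun i _ => Nat.zero_le _)
        (Finset.mem_univ ⟨0, hr⟩)
      omega
    simp [this]
  | succ S ih =>
    intro n hn
    by_cases h0 : ∃ i, n i = 0
    · obtain ⟨i, hi⟩ := h0
      exact ⟨0, fun c => ⟨i, ∅, by simp [hi], by simp⟩⟩
    by_cases h1 : ∃ i, n i = 1
    · obtain ⟨i, hi⟩ := h1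
      refine ⟨1, fun c => ⟨i, {0}, by simp [hi], ?_⟩⟩
      intro u hu v hv huv
      simp only [Finset.mem_singleton] at hu hv
      exact absurd (hu.trans hv.symm) huv
    push_neg at h0 h1
    have h2 : ∀ i, 2 ≤ n i := by
      intro i
      have := h0 i; have := h1 i; omega
    have key : ∀ i : Fin r, ∃ N, HasRamseyProp N (Function.update n i (n i - 1)) := by
      intro i
      apply ih
      have : ∑ j, Function.update n i (n i - 1) j = (∑ j, n j) - 1 := by
        rw [Finset.sum_update_of_mem (Finset.mem_univ i)]
        have : ∑ j ∈ Finset.univ \ {i}, n j = (∑ j, n j) - n i := by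
          rw [eq_tsub_iff_add_eq_of_le (Finset.single_le_sum (fun j _ => Nat.zero_le _) (Finset.mem_univ i)),
            ← Finset.sum_sdiff (Finset.subset_univ {i})]
          simp
        rw [this]
        have := Finset.single_le_sum (f := n) (fun j _ => Nat.zero_le _) (Finset.mem_univ i)
        have := h2 i
        omega
      rw [this]
      omega
    choose Nf hNf using key
    set N := 1 + ∑ i, Nf i with hN
    refine ⟨N, ?_⟩
    intro c
    have hNpos : 0 < N := by omega
    set v : Fin N := ⟨0, hNpos⟩ with hv
    set t : Finset (Fin N) := Finset.univ.erase v with hts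
    have htcard : t.card = ∑ i, Nf i := by
      rw [hts, Finset.card_erase_of_mem (Finset.mem_univ v)]
      simp [hN]
    have hpigeon : ∃ i : Fin r, Nf i ≤ (t.filter (fun u => c s(v, u) = i)).card := by
      by_contra hcon
      push_neg at hcon
      have hsum : t.card = ∑ i : Fin r, (t.filter (fun u => c s(v, u) = i)).card :=
        Finset.card_eq_sum_card_fiberwise (fun u _ => Finset.mem_univ (c s(v, u)))
      have hle : ∑ i : Fin r, ((t.filter (fun u => c s(v, u) = i)).card + 1) ≤ ∑ i, Nf i :=
        Finset.sum_le_sum (fun i _ => by have := hcon i; omega)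
      rw [Finset.sum_add_distrib] at hle
      simp only [Finset.sum_const, Finset.card_univ, Fintype.card_fin, smul_eq_mul, mul_one] at hle
      omega
    obtain ⟨i, hi⟩ := hpigeon
    obtain ⟨j, s, hsub, hcard, hmono⟩ := ramsey_transfer (hNf i) _ hi c
    by_cases hji : j = i
    · subst hji
      have hvs : v ∉ s := by
        intro hmem
        have := hsub hmem
        rw [hts] at this
        exact (Finset.mem_erase.1 (Finset.mem_filter.1 this).1).1 rfl
      refine ⟨j, insert v s, ?_, ?_⟩
      · rw [Finset.card_insert_of_notMem hvs, hcard, Function.update_self]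
        have := h2 j; omega
      · intro a ha b hb hab
        rcases Finset.mem_insert.1 ha with rfl | ha' <;>
          rcases Finset.mem_insert.1 hb with rfl | hb'
        · exact absurd rfl hab
        · exact (Finset.mem_filter.1 (hsub hb')).2
        · rw [Sym2.eq_swap]
          exact (Finset.mem_filter.1 (hsub ha')).2
        · exact hmono a ha' b hb' hab
    · refine ⟨j, s, ?_, hmono⟩
      rw [hcard, Function.update_of_ne hji]


def Mono {V : Type*} {r : ℕ} (c : Sym2 V → Fin r) (i : Fin r) (s : Finset V) : Prop :=
  ∀ u ∈ s, ∀ v ∈ s, u ≠ v → c s(u, v) = i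

def GoodCol {V : Type*} (k n : ℕ) (c : Sym2 V → Fin k) : Prop :=
  ∀ (i : Fin k) (s : Finset V), Mono c i s → s.card < n

lemma goodCol_pullback {V W : Type*} [DecidableEq V] {k n : ℕ} {c : Sym2 V → Fin k}
    (h : GoodCol k n c) (f : W → V) (hf : Function.Injective f) :
    GoodCol k n (fun e => c (e.map f)) := by
  intro i s hs
  have hinj : Set.InjOn f s := fun a _ b _ hab => hf hab
  rw [← Finset.card_image_of_injOn hinj]
  apply h i
  intro u hu v hv huv
  simp only [Finset.mem_image] at hu hv
  obtain ⟨a, ha, rfl⟩ := hu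
  obtain ⟨b, hb, rfl⟩ := hv
  have hab : a ≠ b := fun e => huv (by rw [e])
  have := hs a ha b hb hab
  simp only [Sym2.map_pair_eq] at this
  exact this

/-- The colouring for one multipartite step. -/
def stepCol {V : Type*} [DecidableEq V] {k : ℕ} (m : ℕ) (c : Sym2 V → Fin k) :
    Sym2 (Fin m × V) → Fin (k + 1) :=
  Sym2.lift ⟨fun p q => if p.1 = q.1 then (c s(p.2, q.2)).castSucc else Fin.last k, by
    intro p q
    show (if p.1 = q.1 then _ else _) = (if q.1 = p.1 then _ else _)
    by_cases hpq : p.1 = q.1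
    · rw [if_pos hpq, if_pos hpq.symm, Sym2.eq_swap]
    · rw [if_neg hpq, if_neg (Ne.symm hpq)]⟩

lemma stepCol_eval {V : Type*} [DecidableEq V] {k : ℕ} (m : ℕ) (c : Sym2 V → Fin k)
    (p q : Fin m × V) :
    stepCol m c s(p, q) = if p.1 = q.1 then (c s(p.2, q.2)).castSucc else Fin.last k := rfl

/-- one multipartite step: add one colour, multiply vertices by `n-1`. -/
lemma goodCol_step {V : Type*} [DecidableEq V] {k n : ℕ} (hn : 1 ≤ n) {c : Sym2 V → Fin k}
    (h : GoodCol k n c) :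
    ∃ c' : Sym2 (Fin (n - 1) × V) → Fin (k + 1), GoodCol (k + 1) n c' := by
  refine ⟨stepCol (n - 1) c, ?_⟩
  · intro i s hs
    have heval := stepCol_eval (n - 1) c
    induction i using Fin.lastCases with
    | last =>
      -- all first coordinates distinct
      have hfst : Set.InjOn (Prod.fst : Fin (n-1) × V → Fin (n-1)) ↑s := by
        intro p hp q hq hpq
        by_contra hne
        have := hs p hp q hq hne
        rw [heval, if_pos hpq] at this
        exact absurd this (Fin.castSucc_lt_last _).ne
      calc s.card = (s.image (Prod.fst : Fin (n-1) × V → Fin (n-1))).card := (Finset.card_image_of_injOn hfst).symm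
        _ ≤ Fintype.card (Fin (n - 1)) := by
            simpa using Finset.card_le_univ (s.image (Prod.fst : Fin (n-1) × V → Fin (n-1)))
        _ < n := by simp; omega
    | cast j =>
      have hkey : ∀ p ∈ s, ∀ q ∈ s, p ≠ q → p.1 = q.1 ∧ c s(p.2, q.2) = j := by
        intro p hp q hq hpq
        have := hs p hp q hq hpq
        rw [heval] at this
        by_cases h1 : p.1 = q.1
        · rw [if_pos h1] at this
          exact ⟨h1, Fin.castSucc_injective _ this⟩
        · rw [if_neg h1] at this
          exact absurd this.symm (Fin.castSucc_lt_last _).ne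
      have hsnd : Set.InjOn (Prod.snd : Fin (n-1) × V → V) ↑s := by
        intro p hp q hq hpq
        by_contra hne
        have h1 := (hkey p hp q hq hne).1
        exact hne (Prod.ext h1 hpq)
      rw [← Finset.card_image_of_injOn (f := (Prod.snd : Fin (n-1) × V → V)) hsnd]
      apply h j
      intro u hu v hv huv
      simp only [Finset.mem_image] at hu hv
      obtain ⟨p, hp, rfl⟩ := hu
      obtain ⟨q, hq, rfl⟩ := hv
      have hpq : p ≠ q := fun e => huv (by rw [e])
      exact (hkey p hp q hq hpq).2

lemma goodCol_iter {n : ℕ} (hn : 1 ≤ n) :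
    ∀ (j : ℕ) (V : Type) [Fintype V] [DecidableEq V] (k : ℕ) (c : Sym2 V → Fin k),
      GoodCol k n c → ∃ (W : Type) (iW : Fintype W) (c' : Sym2 W → Fin (k + j)),
        GoodCol (k + j) n c' ∧ @Fintype.card W iW = (n - 1) ^ j * Fintype.card V := by
  intro j
  induction j with
  | zero => intro V _ _ k c hc; exact ⟨V, inferInstance, c, hc, by simp⟩
  | succ j ih =>
    intro V _ _ k c hc
    obtain ⟨c₁, hc₁⟩ := goodCol_step hn hc
    obtain ⟨W, iW, c', hgood, hcard⟩ := ih (Fin (n - 1) × V) (k + 1) c₁ hc₁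
    rw [show k + (j + 1) = k + 1 + j by omega]
    refine ⟨W, iW, c', hgood, ?_⟩
    rw [hcard, Fintype.card_prod, Fintype.card_fin, pow_succ]
    ring


lemma goodCol_base (n : ℕ) (hn : 1 ≤ n) :
    GoodCol 1 n (fun _ : Sym2 (Fin (n - 1)) => (0 : Fin 1)) := by
  intro i s _
  calc s.card ≤ Fintype.card (Fin (n - 1)) := Finset.card_le_univ s
    _ < n := by simp; omega

/-- difference colouring on `Fin 13` from a function on `ℕ`. -/
def diffCol {k : ℕ} (g : ℕ → Fin k) : Sym2 (Fin 13) → Fin k :=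
  Sym2.lift ⟨fun a b => g ((a.val - b.val) + (b.val - a.val)), by
    intro a b; simp [Nat.add_comm]⟩

def schurF : ℕ → Fin 3 := fun d =>
  if d = 1 ∨ d = 4 ∨ d = 10 then 0 else if d = 2 ∨ d = 3 ∨ d = 11 ∨ d = 12 then 1 else 2

def paleyF : ℕ → Fin 2 := fun d =>
  if d = 1 ∨ d = 3 ∨ d = 4 ∨ d = 9 ∨ d = 10 ∨ d = 12 then 0 else 1

lemma schur_no_triangle : ∀ (i : Fin 3) (a b d : Fin 13), a ≠ b → a ≠ d → b ≠ d →
    ¬(diffCol schurF s(a, b) = i ∧ diffCol schurF s(a, d) = i ∧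
      diffCol schurF s(b, d) = i) := by decide

lemma goodCol_of_no3 {V : Type*} {k : ℕ} {c : Sym2 V → Fin k}
    (h : ∀ (i : Fin k) (a b d : V), a ≠ b → a ≠ d → b ≠ d →
      ¬(c s(a, b) = i ∧ c s(a, d) = i ∧ c s(b, d) = i)) : GoodCol k 3 c := by
  classical
  intro i s hs
  by_contra hcard
  push_neg at hcard
  obtain ⟨t, hts, htc⟩ := Finset.exists_subset_card_eq hcard
  obtain ⟨a, b, d, hab, had, hbd, rfl⟩ := Finset.card_eq_three.1 htc
  have ma : a ∈ ({a, b, d} : Finset V) := by simp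
  have mb : b ∈ ({a, b, d} : Finset V) := by simp
  have md : d ∈ ({a, b, d} : Finset V) := by simp
  exact h i a b d hab had hbd
    ⟨hs a (hts ma) b (hts mb) hab, hs a (hts ma) d (hts md) had, hs b (hts mb) d (hts md) hbd⟩

lemma goodCol_schur : GoodCol 3 3 (diffCol schurF) := goodCol_of_no3 schur_no_triangle

set_option maxHeartbeats 1000000 in
lemma paley_no_K4 : ∀ (i : Fin 2) (a b d e : Fin 13), a < b → b < d → d < e →
    ¬(diffCol paleyF s(a, b) = i ∧ diffCol paleyF s(a, d) = i ∧ diffCol paleyF s(a, e) = i ∧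
      diffCol paleyF s(b, d) = i ∧ diffCol paleyF s(b, e) = i ∧ diffCol paleyF s(d, e) = i) := by
  decide

lemma goodCol_of_no4 {V : Type*} [LinearOrder V] {k : ℕ} {c : Sym2 V → Fin k}
    (h : ∀ (i : Fin k) (a b d e : V), a < b → b < d → d < e →
      ¬(c s(a, b) = i ∧ c s(a, d) = i ∧ c s(a, e) = i ∧
        c s(b, d) = i ∧ c s(b, e) = i ∧ c s(d, e) = i)) : GoodCol k 4 c := by
  classical
  intro i s hs
  by_contra hcard
  push_neg at hcard
  obtain ⟨t, hts, htc⟩ := Finset.exists_subset_card_eq hcard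
  have hlen : (t.sort (· ≤ ·)).length = 4 := by rw [Finset.length_sort, htc]
  have hsorted := (t.sortedLT_sort).pairwise
  have hmem : ∀ x ∈ t.sort (· ≤ ·), x ∈ s := fun x hx => hts (Finset.mem_sort _ |>.1 hx)
  obtain ⟨a, b, d, e, heq⟩ : ∃ a b d e, t.sort (· ≤ ·) = [a, b, d, e] := by
    match hl : t.sort (· ≤ ·), hlen with
    | [a, b, d, e], _ => exact ⟨a, b, d, e, rfl⟩
  rw [heq] at hsorted hmem
  simp only [List.pairwise_cons, List.mem_cons, List.not_mem_nil, or_false,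
    List.Pairwise.nil, and_true, forall_eq_or_imp, forall_eq] at hsorted
  obtain ⟨⟨hab, had, hae⟩, ⟨hbd, hbe⟩, hde, -⟩ := hsorted
  have ms : ∀ x ∈ ([a, b, d, e] : List V), x ∈ s := hmem
  simp only [List.mem_cons, List.not_mem_nil, or_false, forall_eq_or_imp, forall_eq] at ms
  obtain ⟨ma, mb, md, me⟩ := ms
  exact h i a b d e hab hbd hde
    ⟨hs a ma b mb hab.ne, hs a ma d md (hab.trans hbd).ne, hs a ma e me (hab.trans (hbd.trans hde)).ne,
     hs b mb d md hbd.ne, hs b mb e me (hbd.trans hde).ne, hs d md e me hde.ne⟩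

lemma goodCol_paley : GoodCol 2 4 (diffCol paleyF) := goodCol_of_no4 paley_no_K4


lemma pow_ind (m : ℕ) (hm : 2 ≤ m) (k0 : ℕ) (hbase : (k0 + 1) * (m + 1) ≤ m ^ k0) :
    ∀ k, k0 ≤ k → (k + 1) * (m + 1) ≤ m ^ k := by
  intro k hk
  induction k, hk using Nat.le_induction with
  | base => exact hbase
  | succ k hk ih =>
    calc (k + 1 + 1) * (m + 1) ≤ (2 * (k + 1)) * (m + 1) :=
          Nat.mul_le_mul (by omega) le_rfl
      _ = ((k + 1) * (m + 1)) * 2 := by ring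
      _ ≤ m ^ k * m := Nat.mul_le_mul ih hm
      _ = m ^ (k + 1) := (pow_succ m k).symm

lemma main_ineq (n r : ℕ) (hn : 3 ≤ n) (hr : 3 ≤ r) (h33 : ¬(n = 3 ∧ r = 3))
    (h34 : ¬(n = 3 ∧ r = 4)) (h43 : ¬(n = 4 ∧ r = 3)) :
    r * n ≤ (n - 1) ^ (r - 1) := by
  rcases Nat.lt_or_ge n 5 with hn5 | hn5
  · interval_cases n
    · -- n = 3
      have hr5 : 5 ≤ r := by omega
      have := pow_ind 2 (by norm_num) 4 (by norm_num) (r - 1) (by omega)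
      have h2 : r - 1 + 1 = r := by omega
      rw [h2] at this
      norm_num at this ⊢
      omega
    · -- n = 4
      have hr4 : 4 ≤ r := by omega
      have := pow_ind 3 (by norm_num) 3 (by norm_num) (r - 1) (by omega)
      have h2 : r - 1 + 1 = r := by omega
      rw [h2] at this
      norm_num at this ⊢
      omega
  · -- n ≥ 5
    have hbase : (2 + 1) * (n - 1 + 1) ≤ (n - 1) ^ 2 := by
      have : n - 1 + 1 = n := by omega
      rw [this]
      nlinarith [Nat.sub_add_cancel (by omega : 1 ≤ n)]
    have := pow_ind (n - 1) (by omega) 2 hbase (r - 1) (by omega)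
    have h2 : r - 1 + 1 = r := by omega
    have h3 : n - 1 + 1 = n := by omega
    rw [h2, h3] at this
    exact this

lemma exists_goodCol (n r : ℕ) (hn : 3 ≤ n) (hr : 3 ≤ r) (hnr : ¬(n = 3 ∧ r = 3)) :
    ∃ c : Sym2 (Fin (r * n)) → Fin (r - 1), GoodCol (r - 1) n c := by
  suffices H : ∃ (W : Type) (iW : Fintype W) (c' : Sym2 W → Fin (r - 1)),
      GoodCol (r - 1) n c' ∧ r * n ≤ @Fintype.card W iW by
    obtain ⟨W, iW, c', hgood, hcard⟩ := H
    letI := iW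
    letI := Classical.decEq W
    obtain ⟨f⟩ : Nonempty (Fin (r * n) ↪ W) :=
      Function.Embedding.nonempty_of_card_le (by simpa using hcard)
    exact ⟨fun e => c' (e.map f), goodCol_pullback hgood f f.injective⟩
  by_cases h34 : n = 3 ∧ r = 4
  · obtain ⟨rfl, rfl⟩ := h34
    exact ⟨Fin 13, inferInstance, diffCol schurF, goodCol_schur, by norm_num⟩
  by_cases h43 : n = 4 ∧ r = 3
  · obtain ⟨rfl, rfl⟩ := h43
    exact ⟨Fin 13, inferInstance, diffCol paleyF, goodCol_paley, by norm_num⟩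
  · rw [show r - 1 = 1 + (r - 2) from by omega]
    obtain ⟨W, iW, c', hgood, hcard⟩ :=
      goodCol_iter (by omega : 1 ≤ n) (r - 2) (Fin (n - 1)) 1 _ (goodCol_base n (by omega))
    refine ⟨W, iW, c', hgood, ?_⟩
    rw [hcard, Fintype.card_fin, ← pow_succ, show r - 2 + 1 = r - 1 by omega]
    exact main_ineq n r hn hr hnr h34 h43

lemma not_hasRamseyProp (n r : ℕ) (hn : 3 ≤ n) (hr : 3 ≤ r) (hnr : ¬(n = 3 ∧ r = 3)) :
    ¬ HasRamseyProp (r * n) (fun _ : Fin (r - 1) => n) := by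
  intro H
  obtain ⟨c, hc⟩ := exists_goodCol n r hn hr hnr
  obtain ⟨i, s, hcard, hmono⟩ := H c
  have := hc i s hmono
  simp only at hcard
  omega

/-- For `n, r ≥ 3` with `(n, r) ≠ (3, 3)`, the `(r-1)`-colour diagonal
Ramsey number satisfies `R_{r-1}(n, …, n) > r·n`. -/
theorem stmt_4 (n r : ℕ) (hn : 3 ≤ n) (hr : 3 ≤ r) (hnr : (n, r) ≠ (3, 3)) :
    r * n < ramseyNumber (fun _ : Fin (r - 1) => n) := by
  have hnr' : ¬(n = 3 ∧ r = 3) := by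
    intro ⟨h1, h2⟩
    exact hnr (by rw [h1, h2])
  have hne : {N | HasRamseyProp N (fun _ : Fin (r - 1) => n)}.Nonempty :=
    ramsey_exists (by omega) _
  have hmem := Nat.sInf_mem hne
  by_contra hcon
  push_neg at hcon
  exact not_hasRamseyProp n r hn hr hnr'
    (hasRamseyProp_mono hcon hmem)
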